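/- (Lally bound) Let C be an r-generator QC code of length mℓ and index ℓ over F_q with generating set {f_1,…,f_r} ⊆ F_q[x]^ℓ. Let Ĉ be the cyclic code of length m over F_{q^ℓ} generated by gcd(Φ(f_1),…,Φ(f_r), x^m−1), where Φ maps (c_0(x),…,c_{ℓ−1}(x)) to Σ_j c_j(x)α^j for a fixed F_q-basis {1,α,…,α^{ℓ−1}} of F_{q^ℓ}, and let B ⊆ F_q^ℓ be the linear code generated by all coefficient-row vectors of the generators. Then d(C) ≥ d(Ĉ)·d(B). -/

import Mathlib

set_option maxHeartbeats 1000000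

open Polynomial

/-- Hamming weight of a vector. -/
noncomputable def wtv {n : ℕ} {α : Type*} [Zero α] (v : Fin n → α) : ℕ :=
  (@Finset.filter _ (fun i => v i ≠ 0) (Classical.decPred _) Finset.univ).card

/-- Minimum Hamming distance of a code given as a set of vectors. -/
noncomputable def minDistSet {n : ℕ} {α : Type*} [Zero α] (S : Set (Fin n → α)) : ℕ :=
  sInf {w | ∃ v ∈ S, v ≠ 0 ∧ w = wtv v}

/-- The polynomial of a length-`m` vector. -/
noncomputable def toPoly {F : Type*} [Field F] {m : ℕ} (v : Fin m → F) : Polynomial F :=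
  ∑ k : Fin m, C (v k) * X ^ (k : ℕ)

lemma toPoly_coeff {F : Type*} [Field F] {m : ℕ} (v : Fin m → F) (i : Fin m) :
    (toPoly v).coeff (i : ℕ) = v i := by
  classical
  simp only [toPoly, finset_sum_coeff, coeff_C_mul, coeff_X_pow]
  rw [Finset.sum_eq_single i]
  · simp
  · intro k _ hk
    have h2 : (k : ℕ) ≠ (i : ℕ) := fun h => hk (Fin.ext h)
    simp [h2, Ne.symm h2]
  · simp

lemma toPoly_degree_lt {F : Type*} [Field F] {m : ℕ} (v : Fin m → F) :
    (toPoly v).degree < (m : WithBot ℕ) := by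
  classical
  refine lt_of_le_of_lt (degree_sum_le _ _) ?_
  rw [Finset.sup_lt_iff (by exact_mod_cast WithBot.bot_lt_coe m)]
  intro k _
  refine lt_of_le_of_lt (degree_C_mul_X_pow_le _ _) ?_
  exact_mod_cast k.isLt

lemma toPoly_coeff_ge {F : Type*} [Field F] {m : ℕ} (v : Fin m → F) {n : ℕ} (hn : m ≤ n) :
    (toPoly v).coeff n = 0 := by
  refine coeff_eq_zero_of_degree_lt (lt_of_lt_of_le (toPoly_degree_lt v) ?_)
  exact_mod_cast hn

theorem stmt8 (F : Type*) [Field F] [Fintype F] (m ℓ r : ℕ) (hm : 0 < m)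
    (hmq : (m : F) ≠ 0) (hℓ : 0 < ℓ)
    -- E = F_{q^ℓ}, with basis {1, α, …, α^{ℓ−1}} over F
    (E : Type*) [Field E] [Algebra F E] (α : E)
    (b : Module.Basis (Fin ℓ) F E) (hb : ∀ j : Fin ℓ, b j = α ^ (j : ℕ))
    -- the generating set {f_1, …, f_r} ⊆ F[x]^ℓ of the QC code C
    (f : Fin r → Fin ℓ → Polynomial F) :
    -- Lally bound: d(C) ≥ d(Ĉ)·d(B), where
    ∀ c : Fin m → Fin ℓ → F,
      -- c is a codeword of C (the R-span of the generators)
      (fun j : Fin ℓ => AdjoinRoot.mk (X ^ m - C 1 : Polynomial F) (toPoly fun i => c i j)) ∈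
        Submodule.span (AdjoinRoot (X ^ m - C 1 : Polynomial F))
          (Set.range fun k : Fin r =>
            fun j : Fin ℓ => AdjoinRoot.mk (X ^ m - C 1 : Polynomial F) (f k j)) →
      c ≠ 0 →
      -- Ĉ is the cyclic code over E generated by gcd(Φ(f_1), …, Φ(f_r), x^m − 1),
      -- i.e. the code whose polynomials lie in the ideal generated by the Φ(f_k)
      -- and x^m − 1, where Φ(v) = Σ_j v_j(x) α^j
      minDistSet {v : Fin m → E |
          toPoly v ∈ Ideal.span ({X ^ m - C 1} ∪
            Set.range fun k : Fin r =>
              ∑ j : Fin ℓ, ((f k j).map (algebraMap F E)) * C (α ^ (j : ℕ)))}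
      -- times d(B), where B ⊆ F^ℓ is spanned by the coefficient rows of the generators
      * minDistSet
          ((Submodule.span F {u : Fin ℓ → F | ∃ (k : Fin r) (i : ℕ),
              u = fun j => (f k j).coeff i} : Submodule F (Fin ℓ → F)) : Set (Fin ℓ → F))
      ≤ ∑ i : Fin m, wtv (c i) := by
  classical
  intro c hc hc0
  set alg := algebraMap F E with halg
  set g₀ : Polynomial F := X ^ m - C 1 with hg₀
  -- extract coefficients
  rw [Submodule.mem_span_range_iff_exists_fun] at hc
  obtain ⟨t, ht⟩ := hc
  choose p hp using fun k => AdjoinRoot.mk_surjective (g := g₀) (t k)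
  have htj : ∀ j, AdjoinRoot.mk g₀ (∑ k, p k * f k j) = AdjoinRoot.mk g₀ (toPoly fun i => c i j) := by
    intro j
    have := congrFun ht j
    simp only [Finset.sum_apply, Pi.smul_apply, smul_eq_mul] at this
    rw [map_sum]
    simpa [map_mul, hp] using this
  have hdvd : ∀ j, g₀ ∣ (∑ k, p k * f k j) - toPoly (fun i => c i j) := by
    intro j
    rw [← AdjoinRoot.mk_eq_zero, map_sub, htj j, sub_self]
  choose q hq using hdvd
  have h1 : ∀ j, toPoly (fun i => c i j) = (∑ k, p k * f k j) - g₀ * q j := by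
    intro j
    rw [← hq j]; ring
  -- the image vector v over E
  set v : Fin m → E := fun i => ∑ j, alg (c i j) * α ^ (j : ℕ) with hv
  -- v i = 0 ↔ c i = 0
  have hvc : ∀ i, v i = 0 ↔ c i = 0 := by
    intro i
    have : v i = b.equivFun.symm (c i) := by
      rw [Module.Basis.equivFun_symm_apply]
      refine Finset.sum_congr rfl fun j _ => ?_
      rw [hb j, Algebra.smul_def]
    rw [this]
    exact map_eq_zero_iff _ (b.equivFun.symm.injective)
  -- Part (a): toPoly v is in the ideal
  have h1E : ∀ j, ∑ k, (p k).map alg * (f k j).map alg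
      = (toPoly fun i => c i j).map alg + ((X : Polynomial E) ^ m - C 1) * (q j).map alg := by
    intro j
    have := congrArg (Polynomial.map alg) (h1 j)
    rw [Polynomial.map_sub, Polynomial.map_mul, Polynomial.map_sum] at this
    simp only [hg₀, Polynomial.map_sub, Polynomial.map_pow, Polynomial.map_X,
      Polynomial.map_one, Polynomial.map_C, map_one, Polynomial.map_mul, Polynomial.C_1] at this
    rw [this]; simp only [Polynomial.C_1]; ring
  have htv : ∑ j, (toPoly fun i => c i j).map alg * C (α ^ (j : ℕ)) = toPoly v := by
    ext n
    simp only [finset_sum_coeff, coeff_mul_C, coeff_map]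
    rcases lt_or_ge n m with hn | hn
    · rw [show n = ((⟨n, hn⟩ : Fin m) : ℕ) from rfl, toPoly_coeff]
      refine Finset.sum_congr rfl fun j _ => ?_
      rw [toPoly_coeff]
    · rw [toPoly_coeff_ge _ hn]
      refine Finset.sum_eq_zero fun j _ => ?_
      rw [toPoly_coeff_ge _ hn, map_zero, zero_mul]
  have hΦsum : ∑ k, (p k).map alg * (∑ j : Fin ℓ, (f k j).map alg * C (α ^ (j : ℕ)))
      = toPoly v + ((X : Polynomial E) ^ m - C 1) * ∑ j, (q j).map alg * C (α ^ (j : ℕ)) := by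
    calc ∑ k, (p k).map alg * (∑ j : Fin ℓ, (f k j).map alg * C (α ^ (j : ℕ)))
        = ∑ j : Fin ℓ, (∑ k, (p k).map alg * (f k j).map alg) * C (α ^ (j : ℕ)) := by
          simp only [Finset.mul_sum, Finset.sum_mul]
          rw [Finset.sum_comm]
          exact Finset.sum_congr rfl fun j _ => Finset.sum_congr rfl fun k _ => by ring
      _ = ∑ j : Fin ℓ, ((toPoly fun i => c i j).map alg
            + ((X : Polynomial E) ^ m - C 1) * (q j).map alg) * C (α ^ (j : ℕ)) :=
          Finset.sum_congr rfl fun j _ => by rw [h1E j]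
      _ = (∑ j, (toPoly fun i => c i j).map alg * C (α ^ (j : ℕ)))
            + ((X : Polynomial E) ^ m - C 1) * ∑ j, (q j).map alg * C (α ^ (j : ℕ)) := by
          simp only [add_mul, Finset.sum_add_distrib, Finset.mul_sum]
          congr 1
          exact Finset.sum_congr rfl fun j _ => by ring
      _ = toPoly v + ((X : Polynomial E) ^ m - C 1) * ∑ j, (q j).map alg * C (α ^ (j : ℕ)) := by
          rw [htv]
  have hmem : toPoly v ∈ Ideal.span ({(X : Polynomial E) ^ m - C 1} ∪
      Set.range fun k : Fin r => ∑ j : Fin ℓ, ((f k j).map alg) * C (α ^ (j : ℕ))) := by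
    have hkey : toPoly v = (∑ k, (p k).map alg * (∑ j : Fin ℓ, (f k j).map alg * C (α ^ (j : ℕ))))
        - ((X : Polynomial E) ^ m - C 1) * ∑ j, (q j).map alg * C (α ^ (j : ℕ)) := by
      rw [hΦsum]; ring
    rw [hkey]
    refine Submodule.sub_mem _ ?_ ?_
    · refine Submodule.sum_mem _ fun k _ => Ideal.mul_mem_left _ _ (Ideal.subset_span ?_)
      exact Or.inr ⟨k, rfl⟩
    · exact Ideal.mul_mem_right _ _ (Ideal.subset_span (Or.inl rfl))
  -- Part (c): rows of c lie in B
  set B : Submodule F (Fin ℓ → F) := Submodule.span F {u : Fin ℓ → F | ∃ (k : Fin r) (i : ℕ),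
      u = fun j => (f k j).coeff i} with hB
  have hrow : ∀ i, c i ∈ B := by
    intro i
    by_contra hnot
    obtain ⟨lam, hlam1, hlam2⟩ := Submodule.exists_dual_map_eq_bot_of_notMem hnot inferInstance
    have hlamB : ∀ u ∈ B, lam u = 0 := by
      intro u hu
      have : lam u ∈ B.map lam := Submodule.mem_map_of_mem hu
      rw [hlam2] at this
      exact (Submodule.mem_bot F).mp this
    set L : Fin ℓ → F := fun j => lam fun j' => if j = j' then 1 else 0 with hLdef
    have hlam_eq : ∀ u : Fin ℓ → F, lam u = ∑ j, u j * L j := by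
      intro u
      rw [LinearMap.pi_apply_eq_sum_univ lam u]
      exact Finset.sum_congr rfl fun j _ => by rw [smul_eq_mul]
    have hgen : ∀ (k : Fin r) (i' : ℕ), (fun j => (f k j).coeff i') ∈ B := by
      intro k i'
      exact Submodule.subset_span ⟨k, i', rfl⟩
    have hfk : ∀ k, ∑ j, C (L j) * f k j = 0 := by
      intro k
      ext i'
      have h0 := hlamB _ (hgen k i')
      rw [hlam_eq] at h0
      simp only [finset_sum_coeff, coeff_C_mul, coeff_zero]
      rw [← h0]
      exact Finset.sum_congr rfl fun j _ => by ring
    have hz2 : ∑ j, C (L j) * ∑ k, p k * f k j = 0 := by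
      calc ∑ j, C (L j) * ∑ k, p k * f k j
          = ∑ k, p k * ∑ j, C (L j) * f k j := by
            simp only [Finset.mul_sum]
            rw [Finset.sum_comm]
            exact Finset.sum_congr rfl fun k _ => Finset.sum_congr rfl fun j _ => by ring
        _ = 0 := by simp [hfk]
    have hQ : ∑ j, C (L j) * toPoly (fun i' => c i' j)
        = g₀ * (-(∑ j, C (L j) * q j)) := by
      calc ∑ j, C (L j) * toPoly (fun i' => c i' j)
          = ∑ j, (C (L j) * ∑ k, p k * f k j - C (L j) * (g₀ * q j)) :=
            Finset.sum_congr rfl fun j _ => by rw [h1 j]; ring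
        _ = (∑ j, C (L j) * ∑ k, p k * f k j) - ∑ j, C (L j) * (g₀ * q j) :=
            Finset.sum_sub_distrib _ _
        _ = g₀ * (-(∑ j, C (L j) * q j)) := by
            rw [hz2, zero_sub, mul_neg, neg_inj, Finset.mul_sum]
            exact Finset.sum_congr rfl fun j _ => by ring
    have hdeg : (∑ j, C (L j) * toPoly (fun i' => c i' j)).degree < (m : WithBot ℕ) := by
      refine lt_of_le_of_lt (degree_sum_le _ _) ?_
      rw [Finset.sup_lt_iff (by exact_mod_cast WithBot.bot_lt_coe m)]
      intro j _
      refine lt_of_le_of_lt (degree_mul_le _ _) ?_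
      refine lt_of_le_of_lt (add_le_add degree_C_le le_rfl) ?_
      rw [zero_add]
      exact toPoly_degree_lt _
    have hQ0 : ∑ j, C (L j) * toPoly (fun i' => c i' j) = 0 := by
      by_contra hne
      have hdvd' : g₀ ∣ ∑ j, C (L j) * toPoly (fun i' => c i' j) := ⟨_, hQ⟩
      have hle := Polynomial.degree_le_of_dvd hdvd' hne
      rw [hg₀, degree_X_pow_sub_C hm] at hle
      exact absurd (lt_of_le_of_lt hle hdeg) (lt_irrefl _)
    have hci : ∑ j, L j * c i j = 0 := by
      have := congrArg (fun P => Polynomial.coeff P (i : ℕ)) hQ0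
      simpa [finset_sum_coeff, coeff_C_mul, toPoly_coeff] using this
    apply hlam1
    rw [hlam_eq]
    rw [← hci]
    exact Finset.sum_congr rfl fun j _ => by ring
  -- Counting
  have hv0 : v ≠ 0 := by
    intro h
    apply hc0
    funext i
    exact (hvc i).mp (congrFun h i)
  set T := (@Finset.filter _ (fun i => v i ≠ 0) (Classical.decPred _) Finset.univ) with hT
  have hdC : minDistSet {v : Fin m → E |
      toPoly v ∈ Ideal.span ({X ^ m - C 1} ∪
        Set.range fun k : Fin r =>
          ∑ j : Fin ℓ, ((f k j).map (algebraMap F E)) * C (α ^ (j : ℕ)))} ≤ wtv v :=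
    Nat.sInf_le ⟨v, hmem, hv0, rfl⟩
  have hdB : ∀ i, c i ≠ 0 → minDistSet (B : Set (Fin ℓ → F)) ≤ wtv (c i) := by
    intro i h
    exact Nat.sInf_le ⟨c i, hrow i, h, rfl⟩
  calc minDistSet _ * minDistSet (B : Set (Fin ℓ → F))
      ≤ wtv v * minDistSet (B : Set (Fin ℓ → F)) := Nat.mul_le_mul_right _ hdC
    _ = ∑ _i ∈ T, minDistSet (B : Set (Fin ℓ → F)) := by
        rw [Finset.sum_const, smul_eq_mul]; rfl
    _ ≤ ∑ i ∈ T, wtv (c i) := by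
        refine Finset.sum_le_sum fun i hi => ?_
        refine hdB i ?_
        intro h
        rw [hT] at hi
        exact ((@Finset.mem_filter _ _ (Classical.decPred _) _ _).mp hi).2 ((hvc i).mpr h)
    _ ≤ ∑ i : Fin m, wtv (c i) :=
        Finset.sum_le_sum_of_subset (@Finset.filter_subset _ (fun i => v i ≠ 0) (Classical.decPred _) Finset.univ)
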